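/- Let X ∈ Ω_j with underline(X) = U_{j−1} ∪ {p} for some p in the Aut(U_{j−1})-orbit of u_j, let κ(X) ∈ Γ with Z = X^{κ(X)}, and let ν(p) ∈ Aut(U_{j−1}) with p^{ν(p)} = u_j. Then: (i) Aut(Z)^{κ(X)^{-1}ν(p)} ≤ Aut(U_j) and underline(Z)^{κ(X)^{-1}ν(p)} = U_j; (ii) the set Q = {q ∈ U : q^{κ(X)^{-1}ν(p)} lies in the Aut(U_j)-orbit of u_j} satisfies Q ⊆ underline(Z); and (iii) Q is independent of the choices involved: if κ₁, κ₂ ∈ Γ satisfy X^{κ₁} = X^{κ₂} = Z and ν₁, ν₂ ∈ Aut(U_{j−1}) satisfy p^{ν₁} = p^{ν₂} = u_j, then {q ∈ U : q^{κ₁^{-1}ν₁} ∈ u_j^{Aut(U_j)}} = {q ∈ U : q^{κ₂^{-1}ν₂} ∈ u_j^{Aut(U_j)}}. -/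

import Mathlib

/-!
We model the setting of the paper: `U` and `R` are finite sets, `Γ` is a
subgroup of `Sym(U)` (here `Equiv.Perm U`).  A partial assignment `X : W → R`
with `W ⊆ U` is modeled as a function `U → Option R` whose domain
(`underline X`) is the set of points where it is `some`.  The paper's right
action is rendered as the corresponding (mirror) left action:
`(γ • X)(u) = X(γ⁻¹ u)`, points are acted on by `u ↦ γ u` and sets by images.
-/

namespace PrefixAssignment

variable {U R : Type*}

/-- The domain `underline X` of a partial assignment. -/
def dom (X : U → Option R) : Set U := {u | X u ≠ none}

/-- The action of a permutation `γ` on a partial assignment: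
`(psmul γ X)(u) = X(γ⁻¹ u)` (left-action form of the paper's
`X^γ(u) = X(u^{γ⁻¹})`). -/
def psmul (γ : Equiv.Perm U) (X : U → Option R) : U → Option R :=
  fun u => X (γ⁻¹ u)

open scoped Classical in
/-- Restriction of a partial assignment to a set `W` of variables. -/
noncomputable def restrict (X : U → Option R) (W : Set U) : U → Option R :=
  fun u => if u ∈ W then X u else none

/-- `Uset u j = U_j = {u_1, …, u_j}` (`u` is 0-indexed). -/
def Uset {k : ℕ} (u : Fin k → U) (j : ℕ) : Set U :=
  {x | ∃ i : Fin k, (i : ℕ) < j ∧ u i = x}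

/-- `Ω_j`: partial assignments whose domain lies in the `Γ`-orbit of `U_j`. -/
def OmegaJ (Γ : Subgroup (Equiv.Perm U)) {k : ℕ} (u : Fin k → U) (j : ℕ)
    (X : U → Option R) : Prop :=
  ∃ γ ∈ Γ, ⇑γ '' dom X = Uset u j

/-- The extension relation `e ⊆ Ω_j × Ω_{j-1}`:  `erel Γ u j X S` holds iff
there is `γ ∈ Γ` taking the domain of `X` to `U_j`, the domain of `S` to
`U_{j-1}`, and the restriction of `γ • X` to `U_{j-1}` to `γ • S`. -/
def erel (Γ : Subgroup (Equiv.Perm U)) {k : ℕ} (u : Fin k → U) (j : ℕ)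
    (X S : U → Option R) : Prop :=
  ∃ γ ∈ Γ, ⇑γ '' dom X = Uset u j ∧ ⇑γ '' dom S = Uset u (j - 1) ∧
    restrict (psmul γ X) (Uset u (j - 1)) = psmul γ S

/-- The setwise stabilizer `Aut(W)` of `W ⊆ U` in `Γ`. -/
def AutSet (Γ : Subgroup (Equiv.Perm U)) (W : Set U) : Set (Equiv.Perm U) :=
  {γ | γ ∈ Γ ∧ ⇑γ '' W = W}

/-- The automorphism group (stabilizer) `Aut(S)` of a partial assignment `S` in `Γ`. -/
def AutAsg (Γ : Subgroup (Equiv.Perm U)) (S : U → Option R) : Set (Equiv.Perm U) :=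
  {γ | γ ∈ Γ ∧ psmul γ S = S}

/-- The orbit of a point `p ∈ U` under a set `A` of permutations. -/
def ptOrbit (A : Set (Equiv.Perm U)) (p : U) : Set U :=
  {q | ∃ γ ∈ A, γ p = q}


lemma psmul_one' (X : U → Option R) : psmul 1 X = X := by
  funext x; simp [psmul]

lemma psmul_mul' (γ δ : Equiv.Perm U) (X : U → Option R) :
    psmul (γ * δ) X = psmul γ (psmul δ X) := by
  funext x; simp [psmul, mul_inv_rev]

lemma dom_psmul (γ : Equiv.Perm U) (X : U → Option R) :
    dom (psmul γ X) = ⇑γ '' dom X := by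
  ext x
  constructor
  · intro h; exact ⟨γ⁻¹ x, h, by simp⟩
  · rintro ⟨y, hy, rfl⟩; simpa [dom, psmul] using hy

lemma image_mul' (a b : Equiv.Perm U) (S : Set U) :
    ⇑(a * b) '' S = ⇑a '' (⇑b '' S) := by
  rw [Equiv.Perm.coe_mul, Set.image_comp]

lemma image_inv_of_image (a : Equiv.Perm U) {S T : Set U} (h : ⇑a '' S = T) :
    ⇑a⁻¹ '' T = S := by
  rw [← h]; ext x; simp

lemma AutSet.mul_mem' {Γ : Subgroup (Equiv.Perm U)} {W : Set U} {a b : Equiv.Perm U}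
    (ha : a ∈ AutSet Γ W) (hb : b ∈ AutSet Γ W) : a * b ∈ AutSet Γ W :=
  ⟨Γ.mul_mem ha.1 hb.1, by rw [image_mul', hb.2, ha.2]⟩

lemma AutSet.inv_mem' {Γ : Subgroup (Equiv.Perm U)} {W : Set U} {a : Equiv.Perm U}
    (ha : a ∈ AutSet Γ W) : a⁻¹ ∈ AutSet Γ W :=
  ⟨Γ.inv_mem ha.1, image_inv_of_image a ha.2⟩

lemma ptOrbit_smul {Γ : Subgroup (Equiv.Perm U)} {W : Set U} {τ : Equiv.Perm U}
    (hτ : τ ∈ AutSet Γ W) {p x : U} (hx : x ∈ ptOrbit (AutSet Γ W) p) :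
    τ x ∈ ptOrbit (AutSet Γ W) p := by
  obtain ⟨γ, hγ, rfl⟩ := hx
  exact ⟨τ * γ, AutSet.mul_mem' hτ hγ, rfl⟩

lemma Uset_split {k : ℕ} (u : Fin k → U) (j : ℕ) (hj1 : 1 ≤ j) (hjk : j ≤ k) :
    Uset u j = Uset u (j - 1) ∪ {u ⟨j - 1, Nat.lt_of_lt_of_le (Nat.sub_lt hj1 Nat.one_pos) hjk⟩} := by
  ext x
  simp only [Uset, Set.mem_union, Set.mem_singleton_iff, Set.mem_setOf_eq]
  constructor
  · rintro ⟨i, hi, rfl⟩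
    rcases lt_or_ge (i : ℕ) (j - 1) with h | h
    · exact Or.inl ⟨i, h, rfl⟩
    · right
      congr 1
      exact Fin.ext (show (i : ℕ) = j - 1 by omega)
  · rintro (⟨i, hi, rfl⟩ | rfl)
    · exact ⟨i, by omega, rfl⟩
    · exact ⟨⟨j - 1, by omega⟩, by show j - 1 < j; omega, rfl⟩

/-- Properties of the minimum-variable selection in test (T1'): with
`Z = κ • X` and `ν = ν(p) ∈ Aut(U_{j-1})`, `ν p = u_j`, one has
(i) `(ν κ⁻¹) Aut(Z) (ν κ⁻¹)⁻¹ ≤ Aut(U_j)` and `(ν κ⁻¹) • underline Z = U_j`;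
(ii) the candidate set `Q = {q : (ν κ⁻¹) q ∈ u_j^{Aut(U_j)}}` satisfies
`Q ⊆ underline Z`; and (iii) `Q` does not depend on the choice of `κ` and `ν`. -/
theorem stmt_10 {U R : Type*} [Finite U] [Finite R]
    (Γ : Subgroup (Equiv.Perm U)) {k : ℕ} (u : Fin k → U)
    (hu : Function.Injective u)
    (j : ℕ) (hj1 : 1 ≤ j) (hjk : j ≤ k)
    (X : U → Option R) (p : U)
    (hX : OmegaJ Γ u j X)
    (hp : p ∈ ptOrbit (AutSet Γ (Uset u (j - 1))) (u ⟨j - 1, by omega⟩))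
    (hdom : dom X = Uset u (j - 1) ∪ {p})
    (κ : Equiv.Perm U) (hκ : κ ∈ Γ)
    (Z : U → Option R) (hZ : Z = psmul κ X)
    (ν : Equiv.Perm U) (hν : ν ∈ AutSet Γ (Uset u (j - 1))) (hνp : ν p = u ⟨j - 1, by omega⟩) :
    (∀ δ ∈ AutAsg Γ Z, (ν * κ⁻¹) * δ * (ν * κ⁻¹)⁻¹ ∈ AutSet Γ (Uset u j)) ∧
      ⇑(ν * κ⁻¹) '' dom Z = Uset u j ∧
      {q : U | (ν * κ⁻¹) q ∈ ptOrbit (AutSet Γ (Uset u j)) (u ⟨j - 1, by omega⟩)} ⊆ dom Z ∧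
      (∀ κ₁ κ₂ ν₁ ν₂ : Equiv.Perm U, κ₁ ∈ Γ → κ₂ ∈ Γ →
        psmul κ₁ X = Z → psmul κ₂ X = Z →
        ν₁ ∈ AutSet Γ (Uset u (j - 1)) → ν₂ ∈ AutSet Γ (Uset u (j - 1)) →
        ν₁ p = u ⟨j - 1, by omega⟩ → ν₂ p = u ⟨j - 1, by omega⟩ →
        {q : U | (ν₁ * κ₁⁻¹) q ∈ ptOrbit (AutSet Γ (Uset u j)) (u ⟨j - 1, by omega⟩)} =
          {q : U | (ν₂ * κ₂⁻¹) q ∈ ptOrbit (AutSet Γ (Uset u j)) (u ⟨j - 1, by omega⟩)}) := by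
  have hUj : Uset u j = Uset u (j - 1) ∪ {u ⟨j - 1, by omega⟩} := Uset_split u j hj1 hjk
  -- the key image computation, for arbitrary valid choices of κ', ν'
  have himg : ∀ κ' ν' : Equiv.Perm U, psmul κ' X = Z → ν' ∈ AutSet Γ (Uset u (j - 1)) →
      ν' p = u ⟨j - 1, by omega⟩ → ⇑(ν' * κ'⁻¹) '' dom Z = Uset u j := by
    intro κ' ν' hκ' hν' hν'p
    have h1 : ⇑κ'⁻¹ '' dom Z = dom X := by
      have : dom Z = ⇑κ' '' dom X := by rw [← hκ', dom_psmul]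
      exact image_inv_of_image κ' this.symm
    rw [image_mul', h1, hdom, Set.image_union, Set.image_singleton, hν'.2, hν'p, hUj]
  have hmain := himg κ ν hZ.symm hν hνp
  refine ⟨?_, hmain, ?_, ?_⟩
  · -- (i) conjugation statement
    rintro δ ⟨hδΓ, hδZ⟩
    have hnk : ν * κ⁻¹ ∈ Γ := Γ.mul_mem hν.1 (Γ.inv_mem hκ)
    refine ⟨Γ.mul_mem (Γ.mul_mem hnk hδΓ) (Γ.inv_mem hnk), ?_⟩
    have hδdom : ⇑δ '' dom Z = dom Z := by rw [← dom_psmul, hδZ]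
    have hinv : ⇑(ν * κ⁻¹)⁻¹ '' Uset u j = dom Z := image_inv_of_image _ hmain
    calc ⇑(ν * κ⁻¹ * δ * (ν * κ⁻¹)⁻¹) '' Uset u j
        = ⇑(ν * κ⁻¹) '' (⇑δ '' (⇑(ν * κ⁻¹)⁻¹ '' Uset u j)) := by
          rw [← image_mul', ← image_mul', mul_assoc]
      _ = Uset u j := by rw [hinv, hδdom, hmain]
  · -- (ii) Q ⊆ dom Z
    intro q hq
    obtain ⟨γ, hγ, hγu⟩ := hq
    have huj : u ⟨j - 1, by omega⟩ ∈ Uset u j := ⟨⟨j - 1, by omega⟩, by show j - 1 < j; omega, rfl⟩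
    have : (ν * κ⁻¹) q ∈ Uset u j := by
      rw [← hγ.2]; exact ⟨_, huj, hγu⟩
    rw [← hmain] at this
    obtain ⟨y, hy, hyq⟩ := this
    rwa [← (ν * κ⁻¹).injective hyq]
  · -- (iii) independence of choices
    intro κ₁ κ₂ ν₁ ν₂ hκ₁ hκ₂ hZ₁ hZ₂ hν₁ hν₂ hν₁p hν₂p
    set τ : Equiv.Perm U := (ν₂ * κ₂⁻¹) * (ν₁ * κ₁⁻¹)⁻¹ with hτdef
    have h1 := himg κ₁ ν₁ hZ₁ hν₁ hν₁p
    have h2 := himg κ₂ ν₂ hZ₂ hν₂ hν₂p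
    have hτ : τ ∈ AutSet Γ (Uset u j) := by
      refine ⟨Γ.mul_mem (Γ.mul_mem hν₂.1 (Γ.inv_mem hκ₂))
        (Γ.inv_mem (Γ.mul_mem hν₁.1 (Γ.inv_mem hκ₁))), ?_⟩
      rw [image_mul', image_inv_of_image _ h1, h2]
    have hkey : ∀ q : U, (ν₂ * κ₂⁻¹) q = τ ((ν₁ * κ₁⁻¹) q) := by
      intro q
      have : τ * (ν₁ * κ₁⁻¹) = ν₂ * κ₂⁻¹ := by rw [hτdef]; group
      rw [← this]; simp
    ext q
    simp only [Set.mem_setOf_eq, hkey q]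
    constructor
    · intro h
      exact ptOrbit_smul hτ h
    · intro h
      have := ptOrbit_smul (AutSet.inv_mem' hτ) h
      simpa using this

end PrefixAssignment
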